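/- Let Γ=(G,σ) be a weighted signed graph with at least one edge. Then (w²/W)·(min_{u∼v} ♯⁻(u,v))/(max_u d(u)) ≤ λ₁(Δ^σ) and λ_N(Δ^σ) ≤ 2 − (w²/W)·(min_{u∼v} ♯⁺(u,v))/(max_u d(u)), where w = min_{u∼v} w(u,v), W = max_{u∼v} w(u,v), and the minima over u ∼ v run over all adjacent pairs. -/

import Mathlib

open Finset Real

open scoped Classical

noncomputable section

namespace SignedGraph

variable {N : ℕ}

/-- The degree `d(u) = Σ_v w(u,v)` of a vertex. -/
def deg (w : Fin N → Fin N → ℝ) (u : Fin N) : ℝ := ∑ v, w u v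

/-- Hypotheses making `(w, sgn)` a weighted signed graph: `w` is a symmetric nonnegative
weight function vanishing on the diagonal and `sgn` is a symmetric `±1`-valued signature. -/
structure IsWSG {N : ℕ} (w : Fin N → Fin N → ℝ) (sgn : Fin N → Fin N → ℝ) : Prop where
  w_symm : ∀ u v, w u v = w v u
  w_nonneg : ∀ u v, 0 ≤ w u v
  w_loopless : ∀ u, w u u = 0
  sgn_symm : ∀ u v, sgn u v = sgn v u
  sgn_pm : ∀ u v, sgn u v = 1 ∨ sgn u v = -1

/-- The signature obtained from `sgn` by switching with the function `θ : V → {±1}`. -/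
def switchSgn (sgn : Fin N → Fin N → ℝ) (θ : Fin N → ℝ) : Fin N → Fin N → ℝ :=
  fun u v => θ u * sgn u v * θ v

/-- The signed adjacency matrix `A^σ`, `A^σ_{uv} = σ(u,v) w(u,v)`. -/
def adj (w sgn : Fin N → Fin N → ℝ) : Matrix (Fin N) (Fin N) ℝ :=
  Matrix.of fun u v => sgn u v * w u v

/-- The symmetric form `I - D^{-1/2} A^σ D^{-1/2}` of the signed normalized Laplacian,
whose eigenvalues are those of `Δ^σ = I - D^{-1} A^σ`. -/
def nlapSym (w sgn : Fin N → Fin N → ℝ) : Matrix (Fin N) (Fin N) ℝ :=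
  Matrix.of fun u v =>
    (if u = v then (1 : ℝ) else 0) -
      sgn u v * w u v / (Real.sqrt (deg w u) * Real.sqrt (deg w v))

/-- The signed (Kirchhoff) Laplacian `L^σ = D - A^σ`. -/
def lap (w sgn : Fin N → Fin N → ℝ) : Matrix (Fin N) (Fin N) ℝ :=
  Matrix.diagonal (deg w) - adj w sgn

/-- The nondecreasing enumeration of the eigenvalues (with multiplicity) of a real
symmetric matrix; junk value `0` if the matrix is not symmetric.  `evals M ⟨k-1,_⟩`
is the `k`-th smallest eigenvalue `λ_k(M)`. -/
def evals (M : Matrix (Fin N) (Fin N) ℝ) : Fin N → ℝ :=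
  if h : M.IsHermitian then (fun i => h.eigenvalues (Tuple.sort h.eigenvalues i)) else 0

/-- The signed triangle count `♯^s(u,v)`: the number of common neighbours `u'` of `u` and
`v` with `σ(u,v)σ(v,u')σ(u',u) = s`. -/
def triCount (w sgn : Fin N → Fin N → ℝ) (s : ℝ) (u v : Fin N) : ℕ :=
  (Finset.univ.filter
    (fun u' => 0 < w u u' ∧ 0 < w v u' ∧ sgn u v * sgn v u' * sgn u' u = s)).card

lemma key {N : ℕ} (hN : 0 < N) (w s : Fin N → Fin N → ℝ)
    (hG : IsWSG w s) (hd : ∀ u, 0 < deg w u) (he : ∃ u v, 0 < w u v)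
    (y : Fin N → ℝ) (hy : ∃ u, y u ≠ 0) (lam : ℝ)
    (heig : ∀ u, ∑ v, s u v * w u v * y v = lam * deg w u * y u) :
    lam ≤ 1 - (sInf {x | ∃ u v, 0 < w u v ∧ x = w u v}) ^ 2 /
        sSup {x | ∃ u v, 0 < w u v ∧ x = w u v} *
        (sInf {x | ∃ u v, 0 < w u v ∧ x = (triCount w s (-1) u v : ℝ)} /
          (⨆ u, deg w u)) := by
  -- abbreviations
  set Sw : Set ℝ := {x | ∃ u v, 0 < w u v ∧ x = w u v} with hSw
  set Sm : Set ℝ := {x | ∃ u v, 0 < w u v ∧ x = (triCount w s (-1) u v : ℝ)} with hSm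
  set wm := sInf Sw with hwm
  set WW := sSup Sw with hWW
  set mm := sInf Sm with hmmdef
  set DD := ⨆ u, deg w u with hDD
  set c := wm ^ 2 / WW * (mm / DD) with hc
  obtain ⟨ue, ve, hwe⟩ := he
  have hSwne : Sw.Nonempty := ⟨w ue ve, ue, ve, hwe, rfl⟩
  have hSwfin : Sw.Finite := by
    apply Set.Finite.subset (Set.finite_range (fun p : Fin N × Fin N => w p.1 p.2))
    rintro x ⟨u, v, -, rfl⟩; exact ⟨(u, v), rfl⟩
  have hSmne : Sm.Nonempty := ⟨_, ue, ve, hwe, rfl⟩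
  have hSmfin : Sm.Finite := by
    apply Set.Finite.subset
      (Set.finite_range (fun p : Fin N × Fin N => (triCount w s (-1) p.1 p.2 : ℝ)))
    rintro x ⟨u, v, -, rfl⟩; exact ⟨(u, v), rfl⟩
  have hwm_mem : wm ∈ Sw := hSwne.csInf_mem hSwfin
  have hwm_pos : 0 < wm := by obtain ⟨u, v, h1, h2⟩ := hwm_mem; rw [h2]; exact h1
  have hwm_le : ∀ u v, 0 < w u v → wm ≤ w u v := fun u v h =>
    csInf_le hSwfin.bddBelow ⟨u, v, h, rfl⟩
  have hWW_mem : WW ∈ Sw := hSwne.csSup_mem hSwfin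
  have hWW_pos : 0 < WW := by obtain ⟨u, v, h1, h2⟩ := hWW_mem; rw [h2]; exact h1
  have hWW_ge : ∀ u v, 0 < w u v → w u v ≤ WW := fun u v h =>
    le_csSup hSwfin.bddAbove ⟨u, v, h, rfl⟩
  have hmm0 : 0 ≤ mm := by
    obtain ⟨u, v, h1, h2⟩ := hSmne.csInf_mem hSmfin
    rw [hmmdef, h2]; positivity
  have hmm_le : ∀ u v, 0 < w u v → mm ≤ (triCount w s (-1) u v : ℝ) := fun u v h =>
    csInf_le hSmfin.bddBelow ⟨u, v, h, rfl⟩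
  have hDD_ge : ∀ u, deg w u ≤ DD := fun u =>
    le_ciSup (Set.finite_range (deg w)).bddAbove u
  have hDD_pos : 0 < DD := lt_of_lt_of_le (hd ⟨0, hN⟩) (hDD_ge _)
  have hc0 : 0 ≤ c := by
    rw [hc]
    exact mul_nonneg (div_nonneg (sq_nonneg _) hWW_pos.le) (div_nonneg hmm0 hDD_pos.le)
  have hcW : c * WW = wm ^ 2 * mm / DD := by
    rw [hc]; field_simp
  have habs : ∀ a b, |s a b| = 1 := by
    intro a b; rcases hG.sgn_pm a b with h | h <;> rw [h] <;> norm_num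
  -- max vertex
  obtain ⟨u₀, -, hmax'⟩ := Finset.exists_max_image Finset.univ (fun u => |y u|)
    ⟨⟨0, hN⟩, Finset.mem_univ _⟩
  have hmax : ∀ v, |y v| ≤ |y u₀| := fun v => hmax' v (Finset.mem_univ v)
  have hy0 : 0 < |y u₀| := by
    obtain ⟨u1, h1⟩ := hy
    exact lt_of_lt_of_le (abs_pos.mpr h1) (hmax u1)
  have htermabs : ∀ v z, |(s u₀ z * w u₀ z) * (s z v * w z v) / deg w z|
      = w u₀ z * w z v / deg w z := by
    intro v z
    rw [abs_div, abs_mul, abs_mul, abs_mul, habs, habs, one_mul, one_mul,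
      abs_of_nonneg (hG.w_nonneg u₀ z), abs_of_nonneg (hG.w_nonneg z v),
      abs_of_pos (hd z)]
  -- key identity
  have key1 : ∑ v, (c * (s u₀ v * w u₀ v)
        + ∑ z, (s u₀ z * w u₀ z) * (s z v * w z v) / deg w z) * y v
      = (c * lam + lam ^ 2) * (deg w u₀ * y u₀) := by
    have hstep : ∀ z, (s u₀ z * w u₀ z / deg w z) * (∑ v, s z v * w z v * y v)
        = lam * (s u₀ z * w u₀ z * y z) := by
      intro z
      rw [heig z]
      have hz := (hd z).ne'
      field_simp
    have e1 : ∑ v, (c * (s u₀ v * w u₀ v)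
          + ∑ z, (s u₀ z * w u₀ z) * (s z v * w z v) / deg w z) * y v
        = c * (∑ v, s u₀ v * w u₀ v * y v)
          + ∑ z, (s u₀ z * w u₀ z / deg w z) * (∑ v, s z v * w z v * y v) := by
      simp only [add_mul, Finset.sum_add_distrib, Finset.sum_mul]
      congr 1
      · rw [Finset.mul_sum]
        exact Finset.sum_congr rfl fun v _ => by ring
      · rw [Finset.sum_comm]
        apply Finset.sum_congr rfl
        intro z _
        rw [Finset.mul_sum]
        exact Finset.sum_congr rfl fun v _ => by ring
    rw [e1]
    have e2 : ∑ z, (s u₀ z * w u₀ z / deg w z) * (∑ v, s z v * w z v * y v)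
        = lam * ∑ z, s u₀ z * w u₀ z * y z := by
      rw [Finset.mul_sum]
      exact Finset.sum_congr rfl fun z _ => hstep z
    rw [e2, heig u₀]
    ring
  -- row sum bound
  have key2 : ∀ v, |c * (s u₀ v * w u₀ v)
        + ∑ z, (s u₀ z * w u₀ z) * (s z v * w z v) / deg w z|
      ≤ (c * w u₀ v + ∑ z, w u₀ z * w z v / deg w z) - 2 * (c * w u₀ v) := by
    intro v
    rcases (hG.w_nonneg u₀ v).lt_or_eq with hw | hw
    · -- edge case
      set F := Finset.univ.filter
        (fun z => 0 < w u₀ z ∧ 0 < w v z ∧ s u₀ v * s v z * s z u₀ = -1) with hF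
      have hFcard : F.card = triCount w s (-1) u₀ v := rfl
      set NN := ∑ z ∈ F, w u₀ z * w z v / deg w z with hNN
      have hNN1 : ∑ z ∈ F, (s u₀ z * w u₀ z) * (s z v * w z v) / deg w z
          = -(s u₀ v) * NN := by
        rw [hNN, Finset.mul_sum]
        apply Finset.sum_congr rfl
        intro z hz
        obtain ⟨hz1, hz2, hz3⟩ := (Finset.mem_filter.mp hz).2
        have hsq : s u₀ v * s u₀ v = 1 := by
          rcases hG.sgn_pm u₀ v with h | h <;> rw [h] <;> norm_num
        have h2' : s u₀ z * s z v = -(s u₀ v) := by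
          rw [hG.sgn_symm u₀ z, hG.sgn_symm z v]
          linear_combination s u₀ v * hz3 - s v z * s z u₀ * hsq
        linear_combination (w u₀ z * w z v / deg w z) * h2'
      have hNNc : c * w u₀ v ≤ NN := by
        have h1 : c * w u₀ v ≤ c * WW :=
          mul_le_mul_of_nonneg_left (hWW_ge u₀ v hw) hc0
        have hterm : ∀ z ∈ F, wm * wm / DD ≤ w u₀ z * w z v / deg w z := by
          intro z hz
          obtain ⟨hz1, hz2, -⟩ := (Finset.mem_filter.mp hz).2
          have l1 : wm ≤ w u₀ z := hwm_le _ _ hz1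
          have l2 : wm ≤ w z v := by rw [hG.w_symm z v]; exact hwm_le _ _ hz2
          apply div_le_div₀ (mul_nonneg (le_trans hwm_pos.le l1) (hG.w_nonneg z v))
            (mul_le_mul l1 l2 hwm_pos.le (le_trans hwm_pos.le l1)) (hd z) (hDD_ge z)
        have h2 : c * WW ≤ NN := by
          rw [hcW]
          have h3 : mm ≤ (F.card : ℝ) := by
            rw [hFcard]; exact_mod_cast hmm_le u₀ v hw
          calc wm ^ 2 * mm / DD = mm * (wm * wm / DD) := by ring
            _ ≤ (F.card : ℝ) * (wm * wm / DD) := by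
                apply mul_le_mul_of_nonneg_right h3 (by positivity)
            _ ≤ NN := by
                rw [hNN]
                have := Finset.card_nsmul_le_sum F
                  (fun z => w u₀ z * w z v / deg w z) (wm * wm / DD) hterm
                simpa [nsmul_eq_mul] using this
        linarith
      have hsplit := Finset.sum_filter_add_sum_filter_not Finset.univ
        (fun z => 0 < w u₀ z ∧ 0 < w v z ∧ s u₀ v * s v z * s z u₀ = -1)
        (fun z => (s u₀ z * w u₀ z) * (s z v * w z v) / deg w z)
      have hsplit2 := Finset.sum_filter_add_sum_filter_not Finset.univ
        (fun z => 0 < w u₀ z ∧ 0 < w v z ∧ s u₀ v * s v z * s z u₀ = -1)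
        (fun z => w u₀ z * w z v / deg w z)
      set R := ∑ z ∈ Finset.univ.filter
        (fun z => ¬(0 < w u₀ z ∧ 0 < w v z ∧ s u₀ v * s v z * s z u₀ = -1)),
        (s u₀ z * w u₀ z) * (s z v * w z v) / deg w z with hRdef
      have hR : |R| ≤ ∑ z ∈ Finset.univ.filter
          (fun z => ¬(0 < w u₀ z ∧ 0 < w v z ∧ s u₀ v * s v z * s z u₀ = -1)),
          w u₀ z * w z v / deg w z := by
        refine (Finset.abs_sum_le_sum_abs _ _).trans (le_of_eq ?_)
        exact Finset.sum_congr rfl fun z _ => htermabs v z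
      have hrw : c * (s u₀ v * w u₀ v)
          + ∑ z, (s u₀ z * w u₀ z) * (s z v * w z v) / deg w z
          = s u₀ v * (c * w u₀ v - NN) + R := by
        rw [← hsplit, hNN1]
        ring
      rw [hrw]
      have habs1 : |s u₀ v * (c * w u₀ v - NN) + R|
          ≤ (NN - c * w u₀ v) + |R| := by
        refine (abs_add_le _ _).trans ?_
        rw [abs_mul, habs, one_mul, abs_of_nonpos (by linarith)]
        linarith
      have hall : ∑ z, w u₀ z * w z v / deg w z
          = NN + ∑ z ∈ Finset.univ.filter
          (fun z => ¬(0 < w u₀ z ∧ 0 < w v z ∧ s u₀ v * s v z * s z u₀ = -1)),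
          w u₀ z * w z v / deg w z := by
        rw [← hsplit2, hNN]
      rw [hall]
      have := hR
      linarith
    · -- no edge
      rw [← hw]
      have h0 : c * (s u₀ v * 0) = 0 := by ring
      rw [h0, zero_add]
      have hb : |∑ z, (s u₀ z * w u₀ z) * (s z v * w z v) / deg w z|
          ≤ ∑ z, w u₀ z * w z v / deg w z := by
        refine (Finset.abs_sum_le_sum_abs _ _).trans (le_of_eq ?_)
        exact Finset.sum_congr rfl fun z _ => htermabs v z
      have : (c * 0 + ∑ z, w u₀ z * w z v / deg w z) - 2 * (c * 0)
          = ∑ z, w u₀ z * w z v / deg w z := by ring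
      rw [this]
      exact hb
  -- total sum of the bound
  have key3 : ∑ v, ((c * w u₀ v + ∑ z, w u₀ z * w z v / deg w z) - 2 * (c * w u₀ v))
      = (1 - c) * deg w u₀ := by
    have h2 : ∀ z : Fin N, ∑ v, w u₀ z * w z v / deg w z = w u₀ z := by
      intro z
      have e : ∑ v, w u₀ z * w z v / deg w z = (w u₀ z / deg w z) * ∑ v, w z v := by
        rw [Finset.mul_sum]
        exact Finset.sum_congr rfl fun v _ => by ring
      rw [e]
      show (w u₀ z / deg w z) * deg w z = w u₀ z
      exact div_mul_cancel₀ _ (hd z).ne'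
    have e0 : ∀ u' : Fin N, ∑ v, w u' v = deg w u' := fun _ => rfl
    simp only [Finset.sum_sub_distrib, Finset.sum_add_distrib]
    rw [Finset.sum_comm]
    have e1 : ∑ v, c * w u₀ v = c * deg w u₀ := by
      rw [← Finset.mul_sum, e0]
    have e2 : ∑ z, ∑ v, w u₀ z * w z v / deg w z = deg w u₀ := by
      rw [Finset.sum_congr rfl fun z _ => h2 z, e0]
    have e3 : ∑ v, 2 * (c * w u₀ v) = 2 * (c * deg w u₀) := by
      rw [← Finset.mul_sum, ← Finset.mul_sum, e0]
    rw [e1, e2, e3]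
    ring
  -- conclude |c lam + lam^2| ≤ 1 - c
  have key4 : |c * lam + lam ^ 2| ≤ 1 - c := by
    have hA : |c * lam + lam ^ 2| * (deg w u₀ * |y u₀|)
        ≤ ((1 - c) * deg w u₀) * |y u₀| := by
      calc |c * lam + lam ^ 2| * (deg w u₀ * |y u₀|)
          = |(c * lam + lam ^ 2) * (deg w u₀ * y u₀)| := by
            rw [abs_mul, abs_mul, abs_of_pos (hd u₀)]
        _ = |∑ v, (c * (s u₀ v * w u₀ v)
            + ∑ z, (s u₀ z * w u₀ z) * (s z v * w z v) / deg w z) * y v| := by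
            rw [key1]
        _ ≤ ∑ v, |(c * (s u₀ v * w u₀ v)
            + ∑ z, (s u₀ z * w u₀ z) * (s z v * w z v) / deg w z) * y v| :=
            Finset.abs_sum_le_sum_abs _ _
        _ ≤ ∑ v, ((c * w u₀ v + ∑ z, w u₀ z * w z v / deg w z)
            - 2 * (c * w u₀ v)) * |y u₀| := by
            apply Finset.sum_le_sum
            intro v _
            rw [abs_mul]
            exact mul_le_mul (key2 v) (hmax v) (abs_nonneg _)
              (le_trans (abs_nonneg _) (key2 v))
        _ = ((1 - c) * deg w u₀) * |y u₀| := by rw [← Finset.sum_mul, key3]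
    have hpos : 0 < deg w u₀ * |y u₀| := mul_pos (hd u₀) hy0
    have hA' : |c * lam + lam ^ 2| * (deg w u₀ * |y u₀|)
        ≤ (1 - c) * (deg w u₀ * |y u₀|) := by
      calc |c * lam + lam ^ 2| * (deg w u₀ * |y u₀|)
          ≤ ((1 - c) * deg w u₀) * |y u₀| := hA
        _ = (1 - c) * (deg w u₀ * |y u₀|) := by ring
    exact le_of_mul_le_mul_right hA' hpos
  -- final step
  have habs' : c * lam + lam ^ 2 ≤ 1 - c := le_trans (le_abs_self _) key4
  have h1c : 0 ≤ 1 - c := le_trans (abs_nonneg _) key4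
  by_contra hcon
  push_neg at hcon
  have hl0 : 0 < lam := lt_of_le_of_lt h1c hcon
  nlinarith [mul_le_mul_of_nonneg_left hcon.le hc0,
    mul_lt_mul_of_pos_left hcon hl0,
    mul_le_mul_of_nonneg_right hcon.le h1c]

/-- For a weighted signed graph with at least one edge,
`(w²/W)·(min_{u∼v} ♯⁻(u,v))/(max_u d(u)) ≤ λ₁(Δ^σ)` and
`λ_N(Δ^σ) ≤ 2 − (w²/W)·(min_{u∼v} ♯⁺(u,v))/(max_u d(u))`. -/
theorem triangle_eigenvalue_bounds {N : ℕ} (hN : 0 < N) (w sgn : Fin N → Fin N → ℝ)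
    (hG : IsWSG w sgn) (hd : ∀ u, 0 < deg w u) (he : ∃ u v, 0 < w u v) :
    (sInf {x | ∃ u v, 0 < w u v ∧ x = w u v}) ^ 2 /
        sSup {x | ∃ u v, 0 < w u v ∧ x = w u v} *
        (sInf {x | ∃ u v, 0 < w u v ∧ x = (triCount w sgn (-1) u v : ℝ)} /
          (⨆ u, deg w u)) ≤
      evals (nlapSym w sgn) ⟨0, hN⟩ ∧
    evals (nlapSym w sgn) ⟨N - 1, by omega⟩ ≤
      2 - (sInf {x | ∃ u v, 0 < w u v ∧ x = w u v}) ^ 2 /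
            sSup {x | ∃ u v, 0 < w u v ∧ x = w u v} *
            (sInf {x | ∃ u v, 0 < w u v ∧ x = (triCount w sgn 1 u v : ℝ)} /
              (⨆ u, deg w u)) := by
  have hH : (nlapSym w sgn).IsHermitian := by
    rw [Matrix.IsHermitian]
    ext i j
    simp only [Matrix.conjTranspose_apply, nlapSym, Matrix.of_apply, star_trivial]
    rw [hG.w_symm j i, hG.sgn_symm j i,
      mul_comm (Real.sqrt (deg w j)) (Real.sqrt (deg w i))]
    congr 1
    simp [eq_comm]
  -- main eigenvalue bound
  have hall : ∀ i : Fin N,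
      (sInf {x | ∃ u v, 0 < w u v ∧ x = w u v}) ^ 2 /
        sSup {x | ∃ u v, 0 < w u v ∧ x = w u v} *
        (sInf {x | ∃ u v, 0 < w u v ∧ x = (triCount w sgn (-1) u v : ℝ)} /
          (⨆ u, deg w u)) ≤ hH.eigenvalues i ∧
      hH.eigenvalues i ≤ 2 - (sInf {x | ∃ u v, 0 < w u v ∧ x = w u v}) ^ 2 /
            sSup {x | ∃ u v, 0 < w u v ∧ x = w u v} *
            (sInf {x | ∃ u v, 0 < w u v ∧ x = (triCount w sgn 1 u v : ℝ)} /
              (⨆ u, deg w u)) := by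
    intro i
    set μ := hH.eigenvalues i with hμ
    have hx := hH.mulVec_eigenvectorBasis i
    set x : Fin N → ℝ := ⇑(hH.eigenvectorBasis i) with hxdef
    have hexu : ∃ u, x u ≠ 0 := by
      by_contra h
      push_neg at h
      exact hH.eigenvectorBasis.orthonormal.ne_zero i (by ext u; simpa using h u)
    have hcomp : ∀ u, ∑ v, nlapSym w sgn u v * x v = μ * x u := by
      intro u
      have h1 := congrFun hx u
      simpa [Matrix.mulVec, dotProduct] using h1
    set y : Fin N → ℝ := fun v => x v / Real.sqrt (deg w v) with hydef
    have hyne : ∃ u, y u ≠ 0 := by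
      obtain ⟨u, hu⟩ := hexu
      exact ⟨u, div_ne_zero hu (Real.sqrt_pos.mpr (hd u)).ne'⟩
    have heq : ∀ u, ∑ v, sgn u v * w u v * y v = (1 - μ) * deg w u * y u := by
      intro u
      have h1 := hcomp u
      simp only [nlapSym, Matrix.of_apply, sub_mul, Finset.sum_sub_distrib,
        ite_mul, one_mul, zero_mul, Finset.sum_ite_eq, Finset.mem_univ,
        if_true] at h1
      -- h1 : x u - ∑ v, sgn u v * w u v / (√du * √dv) * x v = μ * x u
      have h2 : ∑ v, sgn u v * w u v / (Real.sqrt (deg w u) * Real.sqrt (deg w v)) * x v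
          = (1 - μ) * x u := by linarith
      have hsu : (0:ℝ) < Real.sqrt (deg w u) := Real.sqrt_pos.mpr (hd u)
      have hxv : ∑ v, sgn u v * w u v * y v
          = (∑ v, sgn u v * w u v / (Real.sqrt (deg w u) * Real.sqrt (deg w v)) * x v)
            * Real.sqrt (deg w u) := by
        rw [Finset.sum_mul]
        apply Finset.sum_congr rfl
        intro v _
        have hv : Real.sqrt (deg w v) ≠ 0 := (Real.sqrt_pos.mpr (hd v)).ne'
        rw [hydef]
        field_simp
      rw [hxv, h2]
      have hdd : Real.sqrt (deg w u) * Real.sqrt (deg w u) = deg w u :=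
        Real.mul_self_sqrt (hd u).le
      rw [hydef]
      field_simp
      linear_combination (1 - μ) * x u * hdd
    constructor
    · have h := key hN w sgn hG hd he y hyne (1 - μ) heq
      linarith
    · -- apply key to the negated signature
      have hG' : IsWSG w (fun a b => -(sgn a b)) := by
        refine ⟨hG.w_symm, hG.w_nonneg, hG.w_loopless, ?_, ?_⟩
        · intro u v; rw [hG.sgn_symm u v]
        · intro u v
          rcases hG.sgn_pm u v with h | h
          · exact Or.inr (by rw [h])
          · exact Or.inl (by rw [h]; ring)
      have heig' : ∀ u, ∑ v, (fun a b => -(sgn a b)) u v * w u v * y v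
          = (μ - 1) * deg w u * y u := by
        intro u
        have e : ∑ v, -(sgn u v) * w u v * y v = -∑ v, sgn u v * w u v * y v := by
          rw [← Finset.sum_neg_distrib]
          exact Finset.sum_congr rfl fun v _ => by ring
        simp only []
        rw [e, heq u]
        ring
      have h := key hN w (fun a b => -(sgn a b)) hG' hd he y hyne (μ - 1) heig'
      have hswap : ∀ u v : Fin N,
          triCount w (fun a b => -(sgn a b)) (-1) u v = triCount w sgn 1 u v := by
        intro u v
        unfold triCount
        congr 1
        apply Finset.filter_congr
        intro z _
        constructor
        · rintro ⟨a1, a2, a3⟩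
          exact ⟨a1, a2, by linear_combination -a3⟩
        · rintro ⟨a1, a2, a3⟩
          exact ⟨a1, a2, by linear_combination -a3⟩
      have hset : {x | ∃ u v, 0 < w u v ∧
            x = (triCount w (fun a b => -(sgn a b)) (-1) u v : ℝ)}
          = {x | ∃ u v, 0 < w u v ∧ x = (triCount w sgn 1 u v : ℝ)} := by
        ext t
        simp only [Set.mem_setOf_eq, hswap]
      rw [hset] at h
      linarith
  constructor
  · have h := (hall (Tuple.sort hH.eigenvalues ⟨0, hN⟩)).1
    rw [evals, dif_pos hH]
    exact h
  · have h := (hall (Tuple.sort hH.eigenvalues ⟨N - 1, by omega⟩)).2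
    rw [evals, dif_pos hH]
    exact h

end SignedGraph
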